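/- Let C be a neural code with |C| = m > 3 whose codeword containment graph is connected and 2-regular (every vertex has degree exactly 2). Then m is even. -/

import Mathlib

/-- The codeword containment graph of a neural code `C`: vertices are the codewords,
with an edge between distinct codewords iff one strictly contains the other. -/
def CCG {α : Type*} (C : Set (Finset α)) : SimpleGraph C where
  Adj σ τ := σ.1 ⊂ τ.1 ∨ τ.1 ⊂ σ.1
  symm := ⟨fun _ _ h => h.symm⟩
  loopless := ⟨fun σ h => by
    rcases h with h | h <;> exact (ssubset_irrefl _ h)⟩


theorem even_card_of_connected_two_regular_ccg
    (n m : ℕ) (C : Set (Finset (Fin n))) (hfin : C.Finite)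
    (hcard : C.ncard = m) (hm : 3 < m)
    (hconn : (CCG C).Connected)
    (hreg : ∀ v : C, ((CCG C).neighborSet v).ncard = 2) :
    Even m := by
  classical
  haveI : Fintype C := hfin.fintype
  set G := CCG C with hG
  have hAdj : ∀ v w : C, G.Adj v w ↔ (v.1 ⊂ w.1 ∨ w.1 ⊂ v.1) := fun v w => Iff.rfl
  -- degree 2
  have hdeg : ∀ v : C, G.degree v = 2 := by
    intro v
    rw [← SimpleGraph.card_neighborSet_eq_degree, ← Nat.card_eq_fintype_card,
      Nat.card_coe_set_eq]
    exact hreg v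
  -- up and down neighbor sets
  set U : C → Finset C := fun v => Finset.univ.filter (fun w : C => v.1 ⊂ w.1) with hU
  set D : C → Finset C := fun v => Finset.univ.filter (fun w : C => w.1 ⊂ v.1) with hD
  have hmemU : ∀ v w : C, w ∈ U v ↔ v.1 ⊂ w.1 := by
    intro v w; simp [hU]
  have hmemD : ∀ v w : C, w ∈ D v ↔ w.1 ⊂ v.1 := by
    intro v w; simp [hD]
  have hUD : ∀ v : C, (U v).card + (D v).card = 2 := by
    intro v
    have hnb : G.neighborFinset v = U v ∪ D v := by
      ext w
      simp only [SimpleGraph.mem_neighborFinset, hAdj, Finset.mem_union, hmemU, hmemD]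
    have hdisj : Disjoint (U v) (D v) := by
      rw [Finset.disjoint_left]
      intro w hw hw'
      exact ssubset_irrefl _ (((hmemU v w).1 hw).trans ((hmemD v w).1 hw'))
    have := hdeg v
    rw [SimpleGraph.degree, hnb, Finset.card_union_of_disjoint hdisj] at this
    exact this
  -- card C = m
  have hmC : Fintype.card C = m := by
    rw [← hcard, Set.ncard_eq_toFinset_card', Set.toFinset_card]
  -- sum of U-cards = sum of D-cards
  have hsum : ∑ v : C, (U v).card = ∑ v : C, (D v).card := by
    simp only [hU, hD, Finset.card_filter]
    rw [Finset.sum_comm]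
  -- sum of U-cards = m
  have hsumU : ∑ v : C, (U v).card = m := by
    have h2 : ∑ v : C, ((U v).card + (D v).card) = 2 * m := by
      rw [Finset.sum_congr rfl (fun v _ => hUD v)]
      simp [hmC, two_mul, mul_comm]
    rw [Finset.sum_add_distrib, ← hsum, ← two_mul] at h2
    exact Nat.eq_of_mul_eq_mul_left (by norm_num) h2
  -- each U v has even cardinality
  have hevenU : ∀ v : C, Even (U v).card := by
    intro v
    have hle := hUD v
    -- rule out (U v).card = 1
    by_contra hodd
    have hodd' : (U v).card % 2 = 1 := Nat.odd_iff.1 (Nat.not_even_iff_odd.1 hodd)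
    have h1 : (U v).card = 1 := by omega
    have h1' : (D v).card = 1 := by omega
    obtain ⟨τ, hτ⟩ := Finset.card_eq_one.1 h1
    obtain ⟨ρ, hρ⟩ := Finset.card_eq_one.1 h1'
    have hvτ : v.1 ⊂ τ.1 := (hmemU v τ).1 (hτ ▸ Finset.mem_singleton_self τ)
    have hρv : ρ.1 ⊂ v.1 := (hmemD v ρ).1 (hρ ▸ Finset.mem_singleton_self ρ)
    have hρτ : ρ.1 ⊂ τ.1 := hρv.trans hvτ
    have hρneτ : ρ ≠ τ := fun h => ssubset_irrefl _ (h ▸ hρτ)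
    have hvneτ : v ≠ τ := fun h => ssubset_irrefl _ (h ▸ hvτ)
    have hρnev : ρ ≠ v := fun h => ssubset_irrefl _ (h ▸ hρv)
    -- neighborFinsets are pairs
    have key : ∀ a b c : C, b ≠ c → G.Adj a b → G.Adj a c →
        G.neighborFinset a = {b, c} := by
      intro a b c hbc hab hac
      refine (Finset.eq_of_subset_of_card_le ?_ ?_).symm
      · intro x hx
        rcases Finset.mem_insert.1 hx with h | h
        · subst h; exact (SimpleGraph.mem_neighborFinset _ _ _).2 hab
        · rw [Finset.mem_singleton.1 h]; exact (SimpleGraph.mem_neighborFinset _ _ _).2 hac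
      · have hca : (G.neighborFinset a).card = 2 :=
          (SimpleGraph.card_neighborFinset_eq_degree G a).trans (hdeg a)
        rw [hca, Finset.card_insert_of_notMem (by simpa using hbc),
          Finset.card_singleton]
    have hNv : G.neighborFinset v = {ρ, τ} :=
      key v ρ τ hρneτ (Or.inr hρv) (Or.inl hvτ)
    have hNρ : G.neighborFinset ρ = {v, τ} :=
      key ρ v τ hvneτ (Or.inl hρv) (Or.inl hρτ)
    have hNτ : G.neighborFinset τ = {v, ρ} :=
      key τ v ρ hρnev.symm (Or.inr hvτ) (Or.inr hρτ)
    -- the set {v, ρ, τ} is closed under adjacency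
    set S : Set C := {v, ρ, τ} with hS
    have hclosed : ∀ a b : C, a ∈ S → G.Adj a b → b ∈ S := by
      intro a b ha hab
      have hb : b ∈ G.neighborFinset a := (SimpleGraph.mem_neighborFinset _ _ _).2 hab
      rcases ha with h | h | h
      · subst h; rw [hNv] at hb
        rcases Finset.mem_insert.1 hb with h | h
        · exact Or.inr (Or.inl h)
        · exact Or.inr (Or.inr (Finset.mem_singleton.1 h))
      · subst h; rw [hNρ] at hb
        rcases Finset.mem_insert.1 hb with h | h
        · exact Or.inl h
        · exact Or.inr (Or.inr (Finset.mem_singleton.1 h))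
      · subst h; rw [hNτ] at hb
        rcases Finset.mem_insert.1 hb with h | h
        · exact Or.inl h
        · exact Or.inr (Or.inl (Finset.mem_singleton.1 h))
    have hwalk : ∀ (a b : C) (_ : G.Walk a b), a ∈ S → b ∈ S := by
      intro a b p
      induction p with
      | nil => exact id
      | cons h _ ih => intro ha; exact ih (hclosed _ _ ha h)
    have hall : ∀ w : C, w ∈ S := by
      intro w
      obtain ⟨p⟩ := hconn.preconnected v w
      exact hwalk v w p (Or.inl rfl)
    -- so C has at most 3 elements
    have hsub : C ⊆ {v.1, ρ.1, τ.1} := by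
      intro x hx
      rcases hall ⟨x, hx⟩ with h | h | h
      · exact Or.inl (congrArg Subtype.val h)
      · exact Or.inr (Or.inl (congrArg Subtype.val h))
      · exact Or.inr (Or.inr (congrArg Subtype.val h))
    have h3 : C.ncard ≤ 3 := by
      calc C.ncard ≤ ({v.1, ρ.1, τ.1} : Set (Finset (Fin n))).ncard :=
            Set.ncard_le_ncard hsub (Set.toFinite _)
        _ ≤ 3 := by
            refine le_trans (Set.ncard_insert_le _ _) ?_
            have := Set.ncard_insert_le (ρ.1) ({τ.1} : Set (Finset (Fin n)))
            simp [Set.ncard_singleton] at this ⊢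
            omega
    omega
  rw [← hsumU]
  exact Finset.sum_induction _ Even (fun a b => Even.add) Even.zero
    (fun v _ => hevenU v)
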